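/- Let S ⊆ [0,1]^d, let A be a nonempty finite action set, γ ∈ (0,1), Δt ∈ (0,1), and let g̃ : S × A × [0,∞) → S satisfy g̃(s,a,0) = s and the time-Lipschitz condition ‖g̃(s,a,t) − g̃(s,a,t+Δ)‖_∞ ≤ C_T·Δ for some C_T > 0 and all s ∈ S, a ∈ A, t ≥ 0, Δ ∈ (0,1). Let r : S × A → ℝ be bounded measurable, D a probability measure on S, and U the uniform distribution on A. Then for every family Θ = {θ(a)}_{a∈A} of residual-network parameters of a common size (d,m,D',L), the Bellman optimal loss and Bellman effective loss satisfy R_D(Θ) ≤ 2·R̃_D(Θ) + γ²·C_T²·(Δt)²·‖Θ‖_P². -/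

import Mathlib

open MeasureTheory Finset Set ENNReal

noncomputable section

/-- The ReLU activation function. -/
def relu (x : ℝ) : ℝ := max x 0

/-- Parameters of a residual network of size `(d, m, D, L)`. -/
structure ResNet (d m D L : ℕ) where
  u : Fin D → ℝ
  V : Matrix (Fin D) (Fin d) ℝ
  W : Fin L → Matrix (Fin m) (Fin D) ℝ
  Umat : Fin L → Matrix (Fin D) (Fin m) ℝ

namespace ResNet

variable {d m D L : ℕ}

/-- Hidden layers `h^[l]` of the residual network. -/
def hidden (θ : ResNet d m D L) (x : Fin d → ℝ) : ℕ → (Fin D → ℝ)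
  | 0 => θ.V.mulVec x
  | l + 1 =>
    if h : l < L then
      hidden θ x l +
        (θ.Umat ⟨l, h⟩).mulVec (fun j => relu ((θ.W ⟨l, h⟩).mulVec (hidden θ x l) j))
    else hidden θ x l

/-- Output `f(x, θ) = uᵀ h^[L]` of the residual network. -/
def apply (θ : ResNet d m D L) (x : Fin d → ℝ) : ℝ := ∑ i, θ.u i * θ.hidden x L i

/-- Matrix products `(I + 3|U^[l]||W^[l]|) ⋯ (I + 3|U^[1]||W^[1]|) |V|` used in the
weighted path norm. -/
def pathMat (θ : ResNet d m D L) : ℕ → Matrix (Fin D) (Fin d) ℝ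
  | 0 => θ.V.map abs
  | l + 1 =>
    if h : l < L then
      (1 + (3 : ℝ) • ((θ.Umat ⟨l, h⟩).map abs * (θ.W ⟨l, h⟩).map abs)) * pathMat θ l
    else pathMat θ l

/-- Weighted path norm `‖θ‖_P`. -/
def pathNorm (θ : ResNet d m D L) : ℝ :=
  ∑ j, Matrix.vecMul (fun i => |θ.u i|) (θ.pathMat L) j

lemma relu_lip (a b : ℝ) : |relu a - relu b| ≤ |a - b| := abs_max_sub_max_le_abs a b 0

lemma pathMat_nonneg (θ : ResNet d m D L) (l : ℕ) (i : Fin D) (j : Fin d) :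
    0 ≤ θ.pathMat l i j := by
  induction l generalizing i with
  | zero => exact abs_nonneg _
  | succ l ih =>
    rw [pathMat]
    split
    · rw [Matrix.mul_apply]
      refine Finset.sum_nonneg fun p _ => mul_nonneg ?_ (ih p)
      rw [Matrix.add_apply, Matrix.smul_apply, Matrix.mul_apply]
      refine add_nonneg (by rcases eq_or_ne i p with h | h <;> simp [Matrix.one_apply, h]) ?_
      refine smul_nonneg (by norm_num) (Finset.sum_nonneg fun q _ => ?_)
      exact mul_nonneg (abs_nonneg _) (abs_nonneg _)
    · exact ih i

lemma hidden_diff (θ : ResNet d m D L) (x y : Fin d → ℝ) (l : ℕ) (i : Fin D) :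
    |θ.hidden x l i - θ.hidden y l i| ≤ ∑ j, θ.pathMat l i j * |x j - y j| := by
  induction l generalizing i with
  | zero =>
    rw [hidden, hidden, pathMat]
    simp only [Matrix.mulVec, dotProduct, Matrix.map_apply]
    rw [← Finset.sum_sub_distrib]
    refine (Finset.abs_sum_le_sum_abs _ _).trans (Finset.sum_le_sum fun j _ => ?_)
    rw [← mul_sub, abs_mul]
  | succ l ih =>
    rw [hidden, hidden, pathMat]
    split
    case isFalse h => exact ih i
    case isTrue h =>
      have hPδ : ∀ p, 0 ≤ ∑ j, θ.pathMat l p j * |x j - y j| := fun p =>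
        Finset.sum_nonneg fun j _ => mul_nonneg (pathMat_nonneg θ l p j) (abs_nonneg _)
      simp only [Pi.add_apply, Matrix.mulVec, dotProduct]
      have key : |θ.hidden x l i + ∑ j, θ.Umat ⟨l, h⟩ i j * relu (∑ p, θ.W ⟨l, h⟩ j p * θ.hidden x l p)
          - (θ.hidden y l i + ∑ j, θ.Umat ⟨l, h⟩ i j * relu (∑ p, θ.W ⟨l, h⟩ j p * θ.hidden y l p))|
          ≤ (∑ j, θ.pathMat l i j * |x j - y j|)
            + ∑ j, |θ.Umat ⟨l, h⟩ i j| * ∑ p, |θ.W ⟨l, h⟩ j p| * (∑ q, θ.pathMat l p q * |x q - y q|) := by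
        have h1 : ∀ j, |relu (∑ p, θ.W ⟨l, h⟩ j p * θ.hidden x l p)
            - relu (∑ p, θ.W ⟨l, h⟩ j p * θ.hidden y l p)|
            ≤ ∑ p, |θ.W ⟨l, h⟩ j p| * (∑ q, θ.pathMat l p q * |x q - y q|) := by
          intro j
          refine (relu_lip _ _).trans ?_
          rw [← Finset.sum_sub_distrib]
          refine (Finset.abs_sum_le_sum_abs _ _).trans (Finset.sum_le_sum fun p _ => ?_)
          rw [← mul_sub, abs_mul]
          exact mul_le_mul_of_nonneg_left (ih p) (abs_nonneg _)
        calc _ ≤ |θ.hidden x l i - θ.hidden y l i|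
              + |∑ j, θ.Umat ⟨l, h⟩ i j * relu (∑ p, θ.W ⟨l, h⟩ j p * θ.hidden x l p)
                 - ∑ j, θ.Umat ⟨l, h⟩ i j * relu (∑ p, θ.W ⟨l, h⟩ j p * θ.hidden y l p)| := by
                rw [add_sub_add_comm]; exact abs_add_le _ _
        _ ≤ _ := by
          refine add_le_add (ih i) ?_
          rw [← Finset.sum_sub_distrib]
          refine (Finset.abs_sum_le_sum_abs _ _).trans (Finset.sum_le_sum fun j _ => ?_)
          rw [← mul_sub, abs_mul]
          exact mul_le_mul_of_nonneg_left (h1 j) (abs_nonneg _)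
      refine key.trans ?_
      -- now show RHS of key ≤ ∑ j, ((1 + 3•(|U||W|)) * P) i j * δ j
      have expand : ∀ jd : Fin d, (((1 + (3 : ℝ) • ((θ.Umat ⟨l, h⟩).map abs * (θ.W ⟨l, h⟩).map abs)) * θ.pathMat l : Matrix (Fin D) (Fin d) ℝ)) i jd
          = θ.pathMat l i jd + 3 * ∑ p, (∑ j, |θ.Umat ⟨l, h⟩ i j| * |θ.W ⟨l, h⟩ j p|) * θ.pathMat l p jd := by
        intro jd
        rw [Matrix.add_mul, Matrix.one_mul, Matrix.add_apply, Matrix.smul_mul, Matrix.smul_apply,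
          Matrix.mul_apply]
        simp only [Matrix.mul_apply, Matrix.map_apply, smul_eq_mul]
      simp only [expand, add_mul]
      rw [Finset.sum_add_distrib]
      refine add_le_add le_rfl ?_
      have swap1 : ∑ jd, (3 * ∑ p, (∑ j, |θ.Umat ⟨l, h⟩ i j| * |θ.W ⟨l, h⟩ j p|) * θ.pathMat l p jd) * |x jd - y jd|
          = 3 * ∑ j, |θ.Umat ⟨l, h⟩ i j| * ∑ p, |θ.W ⟨l, h⟩ j p| * (∑ q, θ.pathMat l p q * |x q - y q|) := by
        simp only [Finset.mul_sum, Finset.sum_mul]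
        rw [Finset.sum_comm]
        conv_rhs => rw [Finset.sum_comm]
        refine Finset.sum_congr rfl fun p _ => ?_
        rw [Finset.sum_comm]
        exact Finset.sum_congr rfl fun j _ => Finset.sum_congr rfl fun q _ => by ring
      rw [swap1]
      have hnn : 0 ≤ ∑ j, |θ.Umat ⟨l, h⟩ i j| * ∑ p, |θ.W ⟨l, h⟩ j p| * (∑ q, θ.pathMat l p q * |x q - y q|) :=
        Finset.sum_nonneg fun j _ => mul_nonneg (abs_nonneg _)
          (Finset.sum_nonneg fun p _ => mul_nonneg (abs_nonneg _) (hPδ p))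
      linarith

lemma pathNorm_nonneg (θ : ResNet d m D L) : 0 ≤ θ.pathNorm := by
  rw [pathNorm]
  simp only [Matrix.vecMul, dotProduct]
  refine Finset.sum_nonneg fun j _ => Finset.sum_nonneg fun i _ => ?_
  exact mul_nonneg (abs_nonneg _) (pathMat_nonneg θ L i j)

lemma apply_lip (θ : ResNet d m D L) (x y : Fin d → ℝ) :
    |θ.apply x - θ.apply y| ≤ θ.pathNorm * ‖x - y‖ := by
  rw [apply, apply, ← Finset.sum_sub_distrib]
  refine (Finset.abs_sum_le_sum_abs _ _).trans ?_
  have step : ∀ i, |θ.u i * θ.hidden x L i - θ.u i * θ.hidden y L i|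
      ≤ |θ.u i| * ∑ j, θ.pathMat L i j * ‖x - y‖ := by
    intro i
    rw [← mul_sub, abs_mul]
    refine mul_le_mul_of_nonneg_left ((hidden_diff θ x y L i).trans ?_) (abs_nonneg _)
    refine Finset.sum_le_sum fun j _ => mul_le_mul_of_nonneg_left ?_ (pathMat_nonneg θ L i j)
    simpa using norm_le_pi_norm (x - y) j
  refine (Finset.sum_le_sum fun i _ => step i).trans ?_
  rw [pathNorm]
  simp only [Matrix.vecMul, dotProduct, Finset.sum_mul]
  rw [Finset.sum_comm]
  apply le_of_eq
  congr 1; ext i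
  simp [Finset.mul_sum, mul_assoc]

lemma continuous_hidden (θ : ResNet d m D L) (l : ℕ) :
    Continuous fun x => θ.hidden x l := by
  induction l with
  | zero =>
    refine continuous_pi fun i => ?_
    simp only [hidden, Matrix.mulVec, dotProduct]
    exact continuous_finset_sum _ fun j _ => (continuous_const.mul (_root_.continuous_apply j))
  | succ l ih =>
    by_cases h : l < L
    · refine continuous_pi fun i => ?_
      simp only [hidden, dif_pos h, Pi.add_apply, Matrix.mulVec, dotProduct]
      refine ((_root_.continuous_apply i).comp ih).add (continuous_finset_sum _ fun j _ => continuous_const.mul ?_)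
      have hc : Continuous fun x => ∑ p, θ.W ⟨l, h⟩ j p * θ.hidden x l p :=
        continuous_finset_sum _ fun p _ => continuous_const.mul ((_root_.continuous_apply p).comp ih)
      exact continuous_max.comp (hc.prodMk continuous_const)
    · refine continuous_pi fun i => ?_
      simp only [hidden, dif_neg h]
      exact (_root_.continuous_apply i).comp ih

lemma continuous_applyFun (θ : ResNet d m D L) : Continuous θ.apply := by
  unfold ResNet.apply
  exact continuous_finset_sum _ fun i _ =>
    continuous_const.mul ((_root_.continuous_apply i).comp (θ.continuous_hidden L))


end ResNet

/-- Weighted path norm of a family of residual networks. -/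
def pathNormFam {d m D L k : ℕ} (Θ : Fin k → ResNet d m D L) : ℝ := ∑ a, (Θ a).pathNorm

/-- `ρ` is a Barron representation of `h` on `S`. -/
def IsBarronRep (d : ℕ) (S : Set (Fin d → ℝ)) (h : (Fin d → ℝ) → ℝ)
    (ρ : Measure (ℝ × (Fin d → ℝ))) : Prop :=
  IsProbabilityMeasure ρ ∧ ∀ x ∈ S, h x = ∫ p, p.1 * relu (∑ i, p.2 i * x i) ∂ρ

/-- `h` belongs to the Barron space on `S`. -/
def InBarron (d : ℕ) (S : Set (Fin d → ℝ)) (h : (Fin d → ℝ) → ℝ) : Prop :=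
  ∃ ρ, IsBarronRep d S h ρ

/-- The Barron norm of a real-valued function on `S`. -/
def barronNorm (d : ℕ) (S : Set (Fin d → ℝ)) (h : (Fin d → ℝ) → ℝ) : ℝ :=
  sInf { c | ∃ ρ, IsBarronRep d S h ρ ∧
    c = Real.sqrt (∫ p, |p.1| * (∑ i, |p.2 i|) ^ 2 ∂ρ) }

/-- The Barron norm of a family `r(·, a)`, `a ∈ A`. -/
def famBarronNorm (d k : ℕ) (S : Set (Fin d → ℝ)) (r : (Fin d → ℝ) → Fin k → ℝ) : ℝ :=
  Real.sqrt (∑ a, (barronNorm d S fun s => r s a) ^ 2)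

/-- Bellman loss `½ E_{s∼μ, a∼U}[(f(s,θ(a)) − r(s,a) − γ max_{a'} f(next(s,a),θ(a')))²]`,
with `U` the uniform distribution over the `k` actions. -/
def bellmanLoss {d m Dh L : ℕ} (k : ℕ) (γ : ℝ) (μ : Measure (Fin d → ℝ))
    (r : (Fin d → ℝ) → Fin k → ℝ) (next : (Fin d → ℝ) → Fin k → (Fin d → ℝ))
    (Θ : Fin k → ResNet d m Dh L) : ℝ :=
  (1 / (2 * (k : ℝ))) *
    ∑ a, ∫ s, ((Θ a).apply s - r s a - γ * ⨆ a', (Θ a').apply (next s a)) ^ 2 ∂μ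

/-- Empirical Bellman loss over a sample `z_i = (s_i, a_i)` with `s_i' = next s_i a_i`. -/
def empBellmanLoss {d m Dh L : ℕ} (k n : ℕ) (γ : ℝ)
    (r : (Fin d → ℝ) → Fin k → ℝ) (z : Fin n → (Fin d → ℝ) × Fin k)
    (next : (Fin d → ℝ) → Fin k → (Fin d → ℝ)) (Θ : Fin k → ResNet d m Dh L) : ℝ :=
  (1 / (2 * (n : ℝ))) *
    ∑ i, ((Θ (z i).2).apply (z i).1 - r (z i).1 (z i).2
      - γ * ⨆ a', (Θ a').apply (next (z i).1 (z i).2)) ^ 2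

/-- Uniform probability measure on `Fin k`. -/
def uniformFin (k : ℕ) : Measure (Fin k) := (k : ℝ≥0∞)⁻¹ • Measure.count

/-- Law of the i.i.d. sample `(s_i, a_i)_{i=1}^n` with `(s_i, a_i) ∼ μ × U`. -/
def sampleMeasure (d k n : ℕ) (μ : Measure (Fin d → ℝ)) :
    Measure (Fin n → (Fin d → ℝ) × Fin k) :=
  Measure.pi fun _ => μ.prod (uniformFin k)

/-- Rademacher sign of a boolean. -/
def signB (b : Bool) : ℝ := if b then 1 else -1

/-- Uniform measure on `Bool`. -/
def uniformBool : Measure Bool := (2 : ℝ≥0∞)⁻¹ • Measure.count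

/-- Law of `n` i.i.d. Rademacher variables. -/
def radMeasure (n : ℕ) : Measure (Fin n → Bool) := Measure.pi fun _ => uniformBool


section MainHelpers

lemma pathNorm_le_fam {d m Dh L k : ℕ} (Θ : Fin k → ResNet d m Dh L) (a : Fin k) :
    (Θ a).pathNorm ≤ pathNormFam Θ :=
  Finset.single_le_sum (fun a' _ => (Θ a').pathNorm_nonneg) (Finset.mem_univ a)

lemma pathNormFam_nonneg {d m Dh L k : ℕ} (Θ : Fin k → ResNet d m Dh L) :
    0 ≤ pathNormFam Θ :=
  Finset.sum_nonneg fun a _ => (Θ a).pathNorm_nonneg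

lemma sup_lip {d m Dh L k : ℕ} (hk : 0 < k) (Θ : Fin k → ResNet d m Dh L)
    (x y : Fin d → ℝ) :
    |(⨆ a, (Θ a).apply x) - (⨆ a, (Θ a).apply y)| ≤ pathNormFam Θ * ‖x - y‖ := by
  have hne : Nonempty (Fin k) := ⟨⟨0, hk⟩⟩
  have key : ∀ u v : Fin d → ℝ,
      (⨆ a, (Θ a).apply u) - (⨆ a, (Θ a).apply v) ≤ pathNormFam Θ * ‖u - v‖ := by
    intro u v
    rw [sub_le_iff_le_add]
    refine ciSup_le fun a => ?_
    have h1 : (Θ a).apply u - (Θ a).apply v ≤ pathNormFam Θ * ‖u - v‖ :=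
      (le_abs_self _).trans (((Θ a).apply_lip u v).trans
        (mul_le_mul_of_nonneg_right (pathNorm_le_fam Θ a) (norm_nonneg _)))
    have h2 : (Θ a).apply v ≤ ⨆ a', (Θ a').apply v :=
      le_ciSup (f := fun a' => (Θ a').apply v)
        (Set.Finite.bddAbove (Set.finite_range _)) a
    linarith
  rw [abs_sub_le_iff]
  refine ⟨key x y, ?_⟩
  simpa [norm_sub_rev] using key y x

lemma integral_sq_le {α : Type*} [MeasurableSpace α] (μ : Measure α) [IsProbabilityMeasure μ]
    (S : Set α) (hμS : μ Sᶜ = 0) (E F : α → ℝ) (B K : ℝ) (hB : 0 ≤ B)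
    (hEmeas : Measurable E) (hK : ∀ s ∈ S, |E s| ≤ K)
    (hFE : ∀ s ∈ S, |F s - E s| ≤ B) :
    ∫ s, (F s) ^ 2 ∂μ ≤ 2 * ∫ s, (E s) ^ 2 ∂μ + 2 * B ^ 2 := by
  have haeS : ∀ᵐ s ∂μ, s ∈ S := by
    rw [ae_iff]
    simpa [Set.compl_def] using hμS
  have hEint : Integrable (fun s => (E s) ^ 2) μ := by
    refine Integrable.mono' (integrable_const (K ^ 2))
      ((hEmeas.pow_const 2).aestronglyMeasurable) ?_
    filter_upwards [haeS] with s hs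
    rw [Real.norm_eq_abs, abs_of_nonneg (sq_nonneg _)]
    calc (E s) ^ 2 = |E s| ^ 2 := (sq_abs _).symm
    _ ≤ K ^ 2 := pow_le_pow_left₀ (abs_nonneg _) (hK s hs) 2
  have hG : Integrable (fun s => 2 * (E s) ^ 2 + 2 * B ^ 2) μ :=
    (hEint.const_mul 2).add (integrable_const _)
  have hF2le : ∀ᵐ s ∂μ, (F s) ^ 2 ≤ 2 * (E s) ^ 2 + 2 * B ^ 2 := by
    filter_upwards [haeS] with s hs
    have h := hFE s hs
    have h3 : F s = E s + (F s - E s) := by ring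
    have h2 : |F s| ≤ |E s| + B := by
      calc |F s| = |E s + (F s - E s)| := by rw [← h3]
      _ ≤ |E s| + |F s - E s| := abs_add_le _ _
      _ ≤ |E s| + B := by linarith
    nlinarith [sq_abs (F s), sq_abs (E s), abs_nonneg (E s), abs_nonneg (F s),
      sq_nonneg (|E s| - B)]
  have step : ∫ s, (F s) ^ 2 ∂μ ≤ ∫ s, (2 * (E s) ^ 2 + 2 * B ^ 2) ∂μ := by
    by_cases hFi : Integrable (fun s => (F s) ^ 2) μ
    · exact integral_mono_ae hFi hG hF2le
    · rw [integral_undef hFi]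
      exact integral_nonneg fun s => by positivity
  refine step.trans (le_of_eq ?_)
  rw [integral_add (hEint.const_mul 2) (integrable_const _)]
  simp [integral_const_mul, measure_univ]

end MainHelpers

/-- the Bellman optimal loss is controlled by the Bellman effective loss:
`R_D(Θ) ≤ 2 R̃_D(Θ) + γ² C_T² (Δt)² ‖Θ‖_P²`.  The action set is `Fin k` with `k > 0`,
and the norm on `Fin d → ℝ` is the sup (`ℓ∞`) norm. -/
theorem bellman_optimal_le_effective {d m Dh L k : ℕ} (hk : 0 < k)
    {S : Set (Fin d → ℝ)} (hS : S ⊆ Set.Icc (0 : Fin d → ℝ) 1)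
    {γ Δt : ℝ} (hγ : γ ∈ Set.Ioo (0 : ℝ) 1) (hΔt : Δt ∈ Set.Ioo (0 : ℝ) 1)
    (gt : (Fin d → ℝ) → Fin k → ℝ → (Fin d → ℝ))
    (hzero : ∀ s ∈ S, ∀ a, gt s a 0 = s)
    {CT : ℝ} (hCT : 0 < CT)
    (hlip : ∀ s ∈ S, ∀ a, ∀ t : ℝ, 0 ≤ t → ∀ Δ ∈ Set.Ioo (0 : ℝ) 1,
      ‖gt s a t - gt s a (t + Δ)‖ ≤ CT * Δ)
    (r : (Fin d → ℝ) → Fin k → ℝ)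
    (hrmeas : ∀ a, Measurable fun s => r s a)
    (hrbdd : ∃ C : ℝ, ∀ s ∈ S, ∀ a, |r s a| ≤ C)
    (μ : Measure (Fin d → ℝ)) [IsProbabilityMeasure μ] (hμS : μ Sᶜ = 0)
    (Θ : Fin k → ResNet d m Dh L) :
    bellmanLoss k γ μ r (fun s a => gt s a Δt) Θ
      ≤ 2 * bellmanLoss k γ μ r (fun s _ => s) Θ
        + γ ^ 2 * CT ^ 2 * Δt ^ 2 * (pathNormFam Θ) ^ 2 := by
  classical
  have hne : Nonempty (Fin k) := ⟨⟨0, hk⟩⟩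
  have hk' : (0 : ℝ) < (k : ℝ) := by exact_mod_cast hk
  set P := pathNormFam Θ with hP
  have hPnn : 0 ≤ P := pathNormFam_nonneg Θ
  set B := γ * (CT * Δt * P) with hB
  have hBnn : 0 ≤ B :=
    mul_nonneg hγ.1.le (mul_nonneg (mul_nonneg hCT.le hΔt.1.le) hPnn)
  -- a uniform bound on all the networks over `Icc 0 1`
  have hbd : ∀ a : Fin k, ∃ C : ℝ, ∀ s ∈ Set.Icc (0 : Fin d → ℝ) 1, ‖(Θ a).apply s‖ ≤ C :=
    fun a => (isCompact_Icc).exists_bound_of_continuousOn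
      ((Θ a).continuous_applyFun.continuousOn)
  choose C0 hC0 using hbd
  set M := ∑ a, |C0 a| with hM
  have hMb : ∀ a, ∀ s ∈ S, |(Θ a).apply s| ≤ M := by
    intro a s hs
    calc |(Θ a).apply s| ≤ C0 a := hC0 a s (hS hs)
    _ ≤ |C0 a| := le_abs_self _
    _ ≤ M := by
      rw [hM]
      exact Finset.single_le_sum (f := fun a' => |C0 a'|) (fun a' _ => abs_nonneg _) (Finset.mem_univ a)
  obtain ⟨Cr, hCr⟩ := hrbdd
  have hsupb : ∀ s ∈ S, |⨆ a', (Θ a').apply s| ≤ M := by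
    intro s hs
    rw [abs_le]
    constructor
    · refine le_trans ?_ (le_ciSup (Set.Finite.bddAbove (Set.finite_range _)) (⟨0, hk⟩ : Fin k))
      linarith [(abs_le.1 (hMb ⟨0, hk⟩ s hs)).1]
    · exact ciSup_le fun a => (abs_le.1 (hMb a s hs)).2
  -- the key per-action inequality
  have key : ∀ a : Fin k,
      ∫ s, ((Θ a).apply s - r s a - γ * ⨆ a', (Θ a').apply (gt s a Δt)) ^ 2 ∂μ
        ≤ 2 * ∫ s, ((Θ a).apply s - r s a - γ * ⨆ a', (Θ a').apply s) ^ 2 ∂μ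
          + 2 * B ^ 2 := by
    intro a
    refine integral_sq_le μ S hμS
      (fun s => (Θ a).apply s - r s a - γ * ⨆ a', (Θ a').apply s)
      (fun s => (Θ a).apply s - r s a - γ * ⨆ a', (Θ a').apply (gt s a Δt))
      B (M + Cr + γ * M) hBnn ?_ ?_ ?_
    · exact (((Θ a).continuous_applyFun.measurable).sub (hrmeas a)).sub
        (measurable_const.mul (Measurable.iSup fun a' => (Θ a').continuous_applyFun.measurable))
    · intro s hs
      show |(Θ a).apply s - r s a - γ * ⨆ a', (Θ a').apply s| ≤ M + Cr + γ * M
      have h1 := abs_le.1 (hMb a s hs)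
      have h2 := abs_le.1 (hCr s hs a)
      have h3 := abs_le.1 (hsupb s hs)
      have h4 : γ * (⨆ a', (Θ a').apply s) ≤ γ * M :=
        mul_le_mul_of_nonneg_left h3.2 hγ.1.le
      have h5 : -(γ * M) ≤ γ * (⨆ a', (Θ a').apply s) := by
        nlinarith [mul_nonneg hγ.1.le
          (show (0:ℝ) ≤ (⨆ a', (Θ a').apply s) + M by linarith [h3.1])]
      rw [abs_le]
      constructor <;> linarith
    · intro s hs
      show |((Θ a).apply s - r s a - γ * ⨆ a', (Θ a').apply (gt s a Δt))
          - ((Θ a).apply s - r s a - γ * ⨆ a', (Θ a').apply s)| ≤ B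
      have hlip' := hlip s hs a 0 le_rfl Δt hΔt
      rw [hzero s hs a, zero_add] at hlip'
      have heq : ((Θ a).apply s - r s a - γ * ⨆ a', (Θ a').apply (gt s a Δt))
          - ((Θ a).apply s - r s a - γ * ⨆ a', (Θ a').apply s)
          = γ * ((⨆ a', (Θ a').apply s) - ⨆ a', (Θ a').apply (gt s a Δt)) := by ring
      rw [heq, abs_mul, abs_of_nonneg hγ.1.le, hB]
      refine mul_le_mul_of_nonneg_left ?_ hγ.1.le
      calc |(⨆ a', (Θ a').apply s) - ⨆ a', (Θ a').apply (gt s a Δt)|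
          ≤ P * ‖s - gt s a Δt‖ := sup_lip hk Θ s (gt s a Δt)
      _ ≤ P * (CT * Δt) := mul_le_mul_of_nonneg_left hlip' hPnn
      _ = CT * Δt * P := by ring
  -- assemble
  unfold bellmanLoss
  have hmul : (0 : ℝ) ≤ 1 / (2 * (k : ℝ)) := by positivity
  refine le_trans (mul_le_mul_of_nonneg_left (Finset.sum_le_sum fun a _ => key a) hmul)
    (le_of_eq ?_)
  rw [Finset.sum_add_distrib, ← Finset.mul_sum, Finset.sum_const, Finset.card_univ,
    Fintype.card_fin, nsmul_eq_mul]
  have hkne : (k : ℝ) ≠ 0 := ne_of_gt hk'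
  rw [hB]
  field_simp


end
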